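/- Let (A, ≺, ≻) be a dendriform algebra and define π_A ∈ O(2) = Hom(K[C_2] ⊗ A^{⊗2}, A) by π_A([1]; a, b) = a ≺ b and π_A([2]; a, b) = a ≻ b. Then π_A ∘_1 π_A = π_A ∘_2 π_A, i.e. π_A is a multiplication in the operad {O(n)}. -/
import Mathlib


section

variable {A : Type*} [AddCommMonoid A]

/-- Elements of `O(n) = Hom(K[Cₙ] ⊗ A^{⊗n}, A)`, encoded as functions of a
(0-based) label `r < n` and an argument tuple. -/
abbrev DendOp (A : Type*) := ℕ → (ℕ → A) → A

/-- The partial composition `f ∘ᵢ g` (0-based `i`, `n` = arity of `g`),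
defined via the combinatorial maps `R_0` and `R_i`; the value of `g` at the
sum of labels `[1] + ⋯ + [n]` is the sum of its values. -/
def ocomp (i n : ℕ) (f g : DendOp A) : DendOp A :=
  fun r a =>
    f (if r < i then r else if r < i + n then i else r - n + 1)
      (fun k =>
        if k < i then a k
        else if k = i then
          (if i ≤ r ∧ r < i + n then g (r - i) (fun l => a (i + l))
           else ∑ t ∈ Finset.range n, g t (fun l => a (i + l)))
        else a (k + n - 1))

end

/-- The element `π_A ∈ O(2)` of a dendriform algebra:
`π_A([1]; a, b) = a ≺ b`, `π_A([2]; a, b) = a ≻ b` (labels 0-based). -/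
def dendPi {K A : Type*} [Field K] [AddCommGroup A] [Module K A]
    (p s : A →ₗ[K] A →ₗ[K] A) : DendOp A :=
  fun r a => if r = 0 then p (a 0) (a 1) else if r = 1 then s (a 0) (a 1) else 0

/-- for a dendriform algebra `(A, ≺ = p, ≻ = s)`, the element
`π_A ∈ O(2)` satisfies `π_A ∘₁ π_A = π_A ∘₂ π_A` (as elements of `O(3)`,
i.e. at every label `r < 3`), so `π_A` is a multiplication in the operad
`{O(n)}`.  (0-based: `∘₁ = ocomp 0`, `∘₂ = ocomp 1`.) -/
theorem dendriform_pi_is_multiplication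
    {K A : Type*} [Field K] [AddCommGroup A] [Module K A]
    (p s : A →ₗ[K] A →ₗ[K] A)
    (hd1 : ∀ a b c : A, p (p a b) c = p a (p b c + s b c))
    (hd2 : ∀ a b c : A, p (s a b) c = s a (p b c))
    (hd3 : ∀ a b c : A, s (p a b + s a b) c = s a (s b c)) :
    ∀ r < 3, ∀ a : ℕ → A,
      ocomp 0 2 (dendPi p s) (dendPi p s) r a
        = ocomp 1 2 (dendPi p s) (dendPi p s) r a := by
  intro r hr a
  interval_cases r <;>
    simp only [ocomp, dendPi, Finset.sum_range_succ, Finset.sum_range_zero,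
      zero_add] <;> norm_num <;>
    simp [map_add, hd1, hd2, ← hd3]
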